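/- Under the hypotheses of the symmetrized Schlesinger system with B_0 = 0 (so Ĥ_{-1} = Ĥ_0 = Ĥ_1 = 0), the triple trace in lowest degree satisfies: tr(B_1 [B_2, B_3]) = -2 L_2 L_2 Ĥ_2 - 4 L_3 Ĥ_3 + 10 L_4 Ĥ_2 + 4 Ĥ_6. -/

import Mathlib

open Matrix

/-- Under the symmetrized Schlesinger system with `B_0 = 0` (so `Ĥ_{-1} = Ĥ_0 = Ĥ_1 = 0`),
the lowest triple trace satisfies
`tr(B_1 [B_2, B_3]) = -2 L_2 L_2 Ĥ_2 - 4 L_3 Ĥ_3 + 10 L_4 Ĥ_2 + 4 Ĥ_6`. -/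
theorem lowest_triple_trace {X : Type*} (M : ℕ)
    (B : ℤ → X → Matrix (Fin M) (Fin M) ℂ) (hB0 : B 0 = 0)
    (Lm : ℤ → (X → Matrix (Fin M) (Fin M) ℂ) →ₗ[ℂ] (X → Matrix (Fin M) (Fin M) ℂ))
    (Ls : ℤ → (X → ℂ) →ₗ[ℂ] (X → ℂ))
    (hLeib : ∀ m : ℤ, -1 ≤ m → ∀ F G : X → Matrix (Fin M) (Fin M) ℂ,
      Lm m (F * G) = Lm m F * G + F * Lm m G)
    (hTr : ∀ m : ℤ, -1 ≤ m → ∀ F : X → Matrix (Fin M) (Fin M) ℂ,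
      Ls m (fun x => (F x).trace) = fun x => ((Lm m F) x).trace)
    (hSch : ∀ m n : ℤ, -1 ≤ m → 1 ≤ n →
      Lm m (B n) = (∑ k ∈ Finset.Icc 1 (n - 1),
          (B k * B (m + n - k) - B (m + n - k) * B k)) + (n : ℂ) • B (m + n))
    (H : ℤ → X → ℂ)
    (hH : ∀ n, H n = fun x => -(1/4 : ℂ) * ∑ k ∈ Finset.Icc 0 n, (B k x * B (n - k) x).trace)
    (hVir : ∀ m n : ℤ, -1 ≤ m → -1 ≤ n → ∀ g : X → ℂ,
      Ls m (Ls n g) - Ls n (Ls m g) = ((n - m : ℤ) : ℂ) • Ls (m + n) g) :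
    (fun x => (B 1 x * (B 2 x * B 3 x - B 3 x * B 2 x)).trace) =
      (-2 : ℂ) • Ls 2 (Ls 2 (H 2)) - (4 : ℂ) • Ls 3 (H 3) + (10 : ℂ) • Ls 4 (H 2) +
        (4 : ℂ) • H 6 := by
  have hB0x : ∀ x, B 0 x = (0 : Matrix (Fin M) (Fin M) ℂ) := fun x => congrFun hB0 x
  -- Schlesinger values
  have h21 : Lm 2 (B 1) = B 3 := by
    have h := hSch 2 1 (by norm_num) (by norm_num)
    rw [show Finset.Icc (1:ℤ) (1-1) = ∅ by decide] at h
    simpa using h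
  have h31 : Lm 3 (B 1) = B 4 := by
    have h := hSch 3 1 (by norm_num) (by norm_num)
    rw [show Finset.Icc (1:ℤ) (1-1) = ∅ by decide] at h
    simpa using h
  have h41 : Lm 4 (B 1) = B 5 := by
    have h := hSch 4 1 (by norm_num) (by norm_num)
    rw [show Finset.Icc (1:ℤ) (1-1) = ∅ by decide] at h
    simpa using h
  have h32 : Lm 3 (B 2) = (B 1 * B 4 - B 4 * B 1) + (2 : ℂ) • B 5 := by
    have h := hSch 3 2 (by norm_num) (by norm_num)
    rw [show Finset.Icc (1:ℤ) (2-1) = {1} by decide, Finset.sum_singleton] at h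
    norm_num at h
    convert h using 2 <;> norm_num
  have h23 : Lm 2 (B 3) = ((B 1 * B 4 - B 4 * B 1) + (B 2 * B 3 - B 3 * B 2)) + (3 : ℂ) • B 5 := by
    have h := hSch 2 3 (by norm_num) (by norm_num)
    rw [show Finset.Icc (1:ℤ) (3-1) = {1, 2} by decide,
      Finset.sum_insert (by decide), Finset.sum_singleton] at h
    norm_num at h
    convert h using 2 <;> norm_num
  -- products
  have p2 : Lm 2 (B 3 * B 1 + B 1 * B 3) =
      ((((B 1 * B 4 - B 4 * B 1) + (B 2 * B 3 - B 3 * B 2)) + (3 : ℂ) • B 5) * B 1 + B 3 * B 3)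
        + (B 3 * B 3 + B 1 * (((B 1 * B 4 - B 4 * B 1) + (B 2 * B 3 - B 3 * B 2)) + (3 : ℂ) • B 5)) := by
    rw [map_add, hLeib 2 (by norm_num), hLeib 2 (by norm_num), h21, h23]
  have p3 : Lm 3 (B 1 * B 2 + B 2 * B 1) =
      (B 4 * B 2 + B 1 * ((B 1 * B 4 - B 4 * B 1) + (2 : ℂ) • B 5))
        + (((B 1 * B 4 - B 4 * B 1) + (2 : ℂ) • B 5) * B 1 + B 2 * B 4) := by
    rw [map_add, hLeib 3 (by norm_num), hLeib 3 (by norm_num), h31, h32]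
  have p4 : Lm 4 (B 1 * B 1) = B 5 * B 1 + B 1 * B 5 := by
    rw [hLeib 4 (by norm_num), h41]
  -- H expansions
  have hH2 : H 2 = (-(1/4) : ℂ) • (fun x => ((B 1 * B 1) x).trace) := by
    rw [hH 2, show Finset.Icc (0:ℤ) 2 = {0,1,2} by decide]
    funext x
    simp [Finset.sum_insert, hB0x]
  have hH3 : H 3 = (-(1/4) : ℂ) • (fun x => ((B 1 * B 2 + B 2 * B 1) x).trace) := by
    rw [hH 3, show Finset.Icc (0:ℤ) 3 = {0,1,2,3} by decide]
    funext x
    simp [Finset.sum_insert, hB0x]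
  have hH6 : H 6 = (-(1/4) : ℂ) •
      (fun x => ((B 1 * B 5 + B 2 * B 4 + B 3 * B 3 + B 4 * B 2 + B 5 * B 1) x).trace) := by
    rw [hH 6, show Finset.Icc (0:ℤ) 6 = {0,1,2,3,4,5,6} by decide]
    funext x
    simp [Finset.sum_insert, hB0x]
    norm_num
    ring
  -- Ls computations
  have L2H2 : Ls 2 (H 2) = (-(1/4) : ℂ) • (fun x => ((B 3 * B 1 + B 1 * B 3) x).trace) := by
    rw [hH2, _root_.map_smul, hTr 2 (by norm_num), hLeib 2 (by norm_num), h21]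
  have L2L2H2 : Ls 2 (Ls 2 (H 2)) = (-(1/4) : ℂ) • (fun x =>
      (((((B 1 * B 4 - B 4 * B 1) + (B 2 * B 3 - B 3 * B 2)) + (3 : ℂ) • B 5) * B 1 + B 3 * B 3
        + (B 3 * B 3 + B 1 * (((B 1 * B 4 - B 4 * B 1) + (B 2 * B 3 - B 3 * B 2)) + (3 : ℂ) • B 5))) x).trace) := by
    rw [L2H2, _root_.map_smul, hTr 2 (by norm_num), p2]
  have L3H3 : Ls 3 (H 3) = (-(1/4) : ℂ) • (fun x =>
      (((B 4 * B 2 + B 1 * ((B 1 * B 4 - B 4 * B 1) + (2 : ℂ) • B 5))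
        + (((B 1 * B 4 - B 4 * B 1) + (2 : ℂ) • B 5) * B 1 + B 2 * B 4)) x).trace) := by
    rw [hH3, _root_.map_smul, hTr 3 (by norm_num), p3]
  have L4H2 : Ls 4 (H 2) = (-(1/4) : ℂ) • (fun x => ((B 5 * B 1 + B 1 * B 5) x).trace) := by
    rw [hH2, _root_.map_smul, hTr 4 (by norm_num), p4]
  rw [L2L2H2, L3H3, L4H2, hH6]
  funext x
  simp only [Pi.smul_apply, Pi.sub_apply, Pi.add_apply, Pi.mul_apply, smul_eq_mul,
    Matrix.trace_add, Matrix.trace_sub, Matrix.trace_smul, Matrix.add_mul, Matrix.mul_add,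
    Matrix.sub_mul, Matrix.mul_sub, smul_mul_assoc, mul_smul_comm, ← mul_assoc]
  rw [Matrix.trace_mul_comm (B 5 x) (B 1 x), Matrix.trace_mul_comm (B 4 x) (B 2 x),
    Matrix.trace_mul_cycle (B 4 x) (B 1 x) (B 1 x),
    Matrix.trace_mul_cycle (B 1 x) (B 4 x) (B 1 x),
    Matrix.trace_mul_cycle (B 2 x) (B 3 x) (B 1 x),
    Matrix.trace_mul_cycle (B 3 x) (B 2 x) (B 1 x)]
  ring
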